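/- For every 1 < q ≤ 2 and every integer n ≥ 1, the modulus of convexity of the space ℓ_q^n satisfies δ(t) ≥ ((q-1)/8)·t² for all t ∈ [0,2]. -/

import Mathlib

open Real Set Finset

/-- The `ℓ_q` norm on `ℝⁿ`. -/
noncomputable def lqNorm (q : ℝ) {n : ℕ} (x : Fin n → ℝ) : ℝ :=
  (∑ i, |x i| ^ q) ^ (1 / q)

/-- The modulus of convexity of `ℓ_qⁿ`. -/
noncomputable def lqModulusOfConvexity (q : ℝ) (n : ℕ) (t : ℝ) : ℝ :=
  sInf {d : ℝ | ∃ x y : Fin n → ℝ, lqNorm q x ≤ 1 ∧ lqNorm q y ≤ 1 ∧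
    t ≤ lqNorm q (x - y) ∧ d = 1 - lqNorm q ((1 / 2 : ℝ) • (x + y))}

-- Bernoulli upper bound
lemma bern_upper {p s : ℝ} (hp0 : 0 ≤ p) (hp1 : p ≤ 1) (hs : 0 ≤ s) :
    (1 + s) ^ p ≤ 1 + p * s := by
  have h := Real.geom_mean_le_arith_mean2_weighted hp0 (by linarith : (0:ℝ) ≤ 1 - p)
    (by linarith : (0:ℝ) ≤ 1 + s) zero_le_one (by ring)
  rw [Real.one_rpow, mul_one] at h
  linarith

lemma two_le_add_rpow {c t : ℝ} (hc1 : c ≤ 1) (ht0 : 0 < t) (ht1 : t < 1) :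
    2 ≤ (1 + t) ^ (c - 1) + (1 - t) ^ (c - 1) := by
  set a := (1 + t) ^ (c - 1) with ha'
  set b := (1 - t) ^ (c - 1) with hb'
  have hpa : (0:ℝ) < 1 + t := by linarith
  have hpb : (0:ℝ) < 1 - t := by linarith
  have ha : 0 < a := Real.rpow_pos_of_pos hpa _
  have hb : 0 < b := Real.rpow_pos_of_pos hpb _
  have hab : 1 ≤ a * b := by
    rw [ha', hb', ← Real.mul_rpow hpa.le hpb.le]
    have h1 : 0 < (1 + t) * (1 - t) := by nlinarith
    have h2 : (1 + t) * (1 - t) ≤ 1 := by nlinarith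
    exact Real.one_le_rpow_of_pos_of_le_one_of_nonpos h1 h2 (by linarith)
  nlinarith [sq_nonneg (a - b), sq_nonneg (a + b - 2)]

lemma deriv_ineq1 {q : ℝ} (hq : 1 < q) (hq2 : q ≤ 2) :
    ∀ t ∈ Icc (0:ℝ) 1, 2 * (q - 1) * t + (1 - t) ^ (q - 1) ≤ (1 + t) ^ (q - 1) := by
  have hc0 : 0 < q - 1 := by linarith
  have hc1 : q - 1 ≤ 1 := by linarith
  have key : ∀ t ∈ Ioo (0:ℝ) 1,
      HasDerivAt (fun t : ℝ => (1 + t) ^ (q - 1) - (1 - t) ^ (q - 1) - 2 * (q - 1) * t)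
        (1 * (q - 1) * (1 + t) ^ (q - 1 - 1) - -1 * (q - 1) * (1 - t) ^ (q - 1 - 1)
          - 2 * (q - 1)) t := by
    rintro t ⟨ht0, ht1⟩
    have hpa : (0:ℝ) < 1 + t := by linarith
    have hpb : (0:ℝ) < 1 - t := by linarith
    have H1 : HasDerivAt (fun t : ℝ => (1 + t) ^ (q - 1)) (1 * (q - 1) * (1 + t) ^ (q - 1 - 1)) t :=
      (HasDerivAt.const_add 1 (hasDerivAt_id t)).rpow_const (Or.inl hpa.ne')
    have H2 : HasDerivAt (fun t : ℝ => (1 - t) ^ (q - 1)) (-1 * (q - 1) * (1 - t) ^ (q - 1 - 1)) t :=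
      (HasDerivAt.const_sub 1 (hasDerivAt_id t)).rpow_const (Or.inl hpb.ne')
    have H3 : HasDerivAt (fun t : ℝ => 2 * (q - 1) * t) (2 * (q - 1)) t := by
      simpa using (hasDerivAt_id t).const_mul (2 * (q - 1))
    exact (H1.sub H2).sub H3
  have hmono : MonotoneOn
      (fun t : ℝ => (1 + t) ^ (q - 1) - (1 - t) ^ (q - 1) - 2 * (q - 1) * t) (Icc 0 1) := by
    apply monotoneOn_of_deriv_nonneg (convex_Icc 0 1)
    · apply ContinuousOn.sub
      apply ContinuousOn.sub
      · exact (continuous_const.add continuous_id).continuousOn.rpow_const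
          (fun x hx => Or.inr hc0.le)
      · exact (continuous_const.sub continuous_id).continuousOn.rpow_const
          (fun x hx => Or.inr hc0.le)
      · exact (continuous_const.mul continuous_id).continuousOn
    · intro t ht
      rw [interior_Icc] at ht
      exact (key t ht).differentiableAt.differentiableWithinAt
    · intro t ht
      rw [interior_Icc] at ht
      rw [(key t ht).deriv]
      have := two_le_add_rpow hc1 ht.1 ht.2
      nlinarith
  intro t ht
  have h0 := hmono (Set.left_mem_Icc.2 zero_le_one) ht ht.1
  norm_num at h0
  linarith

lemma deriv_ineq2 {q : ℝ} (hq : 1 < q) (hq2 : q ≤ 2) :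
    ∀ t ∈ Icc (0:ℝ) 1, 2 + q * (q - 1) * t ^ 2 ≤ (1 + t) ^ q + (1 - t) ^ q := by
  have hq0 : 0 < q := by linarith
  have key : ∀ t ∈ Ioo (0:ℝ) 1,
      HasDerivAt (fun t : ℝ => (1 + t) ^ q + (1 - t) ^ q - q * (q - 1) * t ^ 2)
        (1 * q * (1 + t) ^ (q - 1) + -1 * q * (1 - t) ^ (q - 1) - q * (q - 1) * (2 * t)) t := by
    rintro t ⟨ht0, ht1⟩
    have hpa : (0:ℝ) < 1 + t := by linarith
    have hpb : (0:ℝ) < 1 - t := by linarith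
    have H1 : HasDerivAt (fun t : ℝ => (1 + t) ^ q) (1 * q * (1 + t) ^ (q - 1)) t :=
      (HasDerivAt.const_add 1 (hasDerivAt_id t)).rpow_const (Or.inl hpa.ne')
    have H2 : HasDerivAt (fun t : ℝ => (1 - t) ^ q) (-1 * q * (1 - t) ^ (q - 1)) t :=
      (HasDerivAt.const_sub 1 (hasDerivAt_id t)).rpow_const (Or.inl hpb.ne')
    have H3 : HasDerivAt (fun t : ℝ => q * (q - 1) * t ^ 2) (q * (q - 1) * (2 * t)) t := by
      have := (hasDerivAt_pow 2 t).const_mul (q * (q - 1))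
      simpa using this
    exact (H1.add H2).sub H3
  have hmono : MonotoneOn
      (fun t : ℝ => (1 + t) ^ q + (1 - t) ^ q - q * (q - 1) * t ^ 2) (Icc 0 1) := by
    apply monotoneOn_of_deriv_nonneg (convex_Icc 0 1)
    · apply ContinuousOn.sub
      apply ContinuousOn.add
      · exact (continuous_const.add continuous_id).continuousOn.rpow_const
          (fun x hx => Or.inr hq0.le)
      · exact (continuous_const.sub continuous_id).continuousOn.rpow_const
          (fun x hx => Or.inr hq0.le)
      · exact (continuous_const.mul (continuous_pow 2)).continuousOn
    · intro t ht
      rw [interior_Icc] at ht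
      exact (key t ht).differentiableAt.differentiableWithinAt
    · intro t ht
      rw [interior_Icc] at ht
      rw [(key t ht).deriv]
      have h1 := deriv_ineq1 hq hq2 t ⟨ht.1.le, ht.2.le⟩
      nlinarith
  intro t ht
  have h0 := hmono (Set.left_mem_Icc.2 zero_le_one) ht ht.1
  norm_num at h0
  linarith

lemma keyK {q : ℝ} (hq : 1 < q) (hq2 : q ≤ 2) {t : ℝ} (ht : t ∈ Icc (0:ℝ) 1) :
    (1 + (q - 1) * t ^ 2) ^ (q / 2) ≤ ((1 + t) ^ q + (1 - t) ^ q) / 2 := by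
  have h1 : (1 + (q - 1) * t ^ 2) ^ (q / 2) ≤ 1 + (q / 2) * ((q - 1) * t ^ 2) := by
    apply bern_upper (by linarith) (by linarith)
    have := sq_nonneg t
    nlinarith
  have h2 := deriv_ineq2 hq hq2 t ht
  linarith

lemma key5 {q : ℝ} (hq : 1 < q) (hq2 : q ≤ 2) {u v : ℝ} (hv : 0 ≤ v) (huv : v ≤ u) :
    (u ^ 2 + (q - 1) * v ^ 2) ^ (q / 2) ≤ ((u + v) ^ q + (u - v) ^ q) / 2 := by
  have hq0 : (0:ℝ) < q := by linarith
  rcases eq_or_lt_of_le (hv.trans huv) with hu | hu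
  · have hv0 : v = 0 := le_antisymm (by linarith) hv
    rw [← hu, hv0]
    norm_num [Real.zero_rpow (by positivity : q / 2 ≠ 0), Real.zero_rpow hq0.ne']
  · set t := v / u with htdef
    have ht0 : 0 ≤ t := div_nonneg hv hu.le
    have ht1 : t ≤ 1 := (div_le_one hu).2 huv
    have e1 : u ^ 2 + (q - 1) * v ^ 2 = u ^ 2 * (1 + (q - 1) * t ^ 2) := by
      rw [htdef]; field_simp
    have e2 : u + v = u * (1 + t) := by rw [htdef]; field_simp
    have e3 : u - v = u * (1 - t) := by rw [htdef]; field_simp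
    have hbase : (0:ℝ) ≤ 1 + (q - 1) * t ^ 2 := by nlinarith [sq_nonneg t]
    have hu2q : ((u:ℝ) ^ 2) ^ (q / 2) = u ^ q := by
      rw [← Real.rpow_natCast u 2, ← Real.rpow_mul hu.le]
      norm_num
      congr 1
      ring
    rw [e1, e2, e3, Real.mul_rpow (by positivity) hbase,
      Real.mul_rpow hu.le (by linarith), Real.mul_rpow hu.le (by linarith), hu2q]
    have hK := keyK hq hq2 ⟨ht0, ht1⟩
    have huq : (0:ℝ) ≤ u ^ q := Real.rpow_nonneg hu.le q
    calc u ^ q * (1 + (q - 1) * t ^ 2) ^ (q / 2)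
        ≤ u ^ q * (((1 + t) ^ q + (1 - t) ^ q) / 2) := by
          exact mul_le_mul_of_nonneg_left hK huq
      _ = (u ^ q * (1 + t) ^ q + u ^ q * (1 - t) ^ q) / 2 := by ring

lemma sum_eq_aux (x y : ℝ) :
    (|x + y| = |x| + |y| ∧ |x - y| = |(|x| - |y|)|) ∨
    (|x - y| = |x| + |y| ∧ |x + y| = |(|x| - |y|)|) := by
  rcases le_total 0 x with hx | hx <;> rcases le_total 0 y with hy | hy
  · left
    rw [abs_of_nonneg hx, abs_of_nonneg hy, abs_of_nonneg (by linarith)]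
    exact ⟨rfl, rfl⟩
  · right
    rw [abs_of_nonneg hx, abs_of_nonpos hy, abs_of_nonneg (by linarith)]
    constructor
    · ring
    · congr 1; ring
  · right
    rw [abs_of_nonpos hx, abs_of_nonneg hy, abs_of_nonpos (by linarith)]
    constructor
    · ring
    · rw [← abs_neg]; congr 1; ring
  · left
    rw [abs_of_nonpos hx, abs_of_nonpos hy, abs_of_nonpos (by linarith)]
    constructor
    · ring
    · rw [← abs_neg]; congr 1; ring

lemma key6 {q : ℝ} (hq : 1 < q) (hq2 : q ≤ 2) (a b : ℝ) :
    (((a + b) / 2) ^ 2 + (q - 1) * ((a - b) / 2) ^ 2) ^ (q / 2)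
      ≤ (|a| ^ q + |b| ^ q) / 2 := by
  set x := (a + b) / 2 with hx
  set y := (a - b) / 2 with hy
  set U := max |x| |y| with hU
  set V := min |x| |y| with hV
  have hV0 : 0 ≤ V := le_min (abs_nonneg _) (abs_nonneg _)
  have hUV : V ≤ U := min_le_max
  have hstep1 : x ^ 2 + (q - 1) * y ^ 2 ≤ U ^ 2 + (q - 1) * V ^ 2 := by
    rcases le_total |x| |y| with h | h
    · rw [hU, hV, max_eq_right h, min_eq_left h]
      have h2 : x ^ 2 ≤ y ^ 2 := by
        rw [← sq_abs x, ← sq_abs y]; exact pow_le_pow_left₀ (abs_nonneg _) h 2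
      have : x ^ 2 + (q - 1) * y ^ 2 ≤ y ^ 2 + (q - 1) * x ^ 2 := by nlinarith
      calc x ^ 2 + (q - 1) * y ^ 2 ≤ y ^ 2 + (q - 1) * x ^ 2 := this
        _ = |y| ^ 2 + (q - 1) * |x| ^ 2 := by rw [sq_abs, sq_abs]
    · rw [hU, hV, max_eq_left h, min_eq_right h, sq_abs, sq_abs]
  have hbase : (0:ℝ) ≤ x ^ 2 + (q - 1) * y ^ 2 := by nlinarith [sq_nonneg x, sq_nonneg y]
  have h2 : (x ^ 2 + (q - 1) * y ^ 2) ^ (q / 2) ≤ (U ^ 2 + (q - 1) * V ^ 2) ^ (q / 2) :=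
    Real.rpow_le_rpow hbase hstep1 (by positivity)
  have h3 := key5 hq hq2 hV0 hUV
  have hsum : (U + V) ^ q + (U - V) ^ q = |a| ^ q + |b| ^ q := by
    have hUV1 : U + V = |x| + |y| := max_add_min _ _
    have hUV2 : U - V = |(|x| - |y|)| := by
      rw [hU, hV, max_sub_min_eq_abs, abs_sub_comm]
    have hax : a = x + y := by rw [hx, hy]; ring
    have hbx : b = x - y := by rw [hx, hy]; ring
    rcases sum_eq_aux x y with ⟨h1, h2⟩ | ⟨h1, h2⟩
    · rw [hUV1, hUV2, hax, hbx, h1, h2]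
    · rw [hUV1, hUV2, hax, hbx, h1, h2]; ring
  rw [← hsum]
  exact h2.trans h3

lemma revMinkowski {n : ℕ} {r : ℝ} (hr0 : 0 < r) (hr1 : r ≤ 1) (f g : Fin n → ℝ)
    (hf : ∀ i, 0 ≤ f i) (hg : ∀ i, 0 ≤ g i) :
    (∑ i, f i ^ r) ^ (1 / r) + (∑ i, g i ^ r) ^ (1 / r)
      ≤ (∑ i, (f i + g i) ^ r) ^ (1 / r) := by
  rcases eq_or_lt_of_le hr1 with rfl | hr1
  · simp only [Real.rpow_one, one_div_one]
    rw [← Finset.sum_add_distrib]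
  set S := ∑ i, f i ^ r with hS
  set T := ∑ i, g i ^ r with hT
  have hS0 : 0 ≤ S := Finset.sum_nonneg fun i _ => Real.rpow_nonneg (hf i) r
  have hT0 : 0 ≤ T := Finset.sum_nonneg fun i _ => Real.rpow_nonneg (hg i) r
  by_cases hSz : S = 0
  · have hfz : ∀ i, f i = 0 := by
      intro i
      have h2 : f i ^ r = 0 := (Finset.sum_eq_zero_iff_of_nonneg
        (fun j _ => Real.rpow_nonneg (hf j) r)).1 hSz i (Finset.mem_univ i)
      by_contra hne
      exact (Real.rpow_pos_of_pos (lt_of_le_of_ne (hf i) (Ne.symm hne)) r).ne' h2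
    simp only [hSz, Real.zero_rpow (one_div_ne_zero hr0.ne'), zero_add]
    have : ∀ i, f i + g i = g i := fun i => by rw [hfz i, zero_add]
    simp only [this, hT]
    exact le_refl _
  by_cases hTz : T = 0
  · have hgz : ∀ i, g i = 0 := by
      intro i
      have h2 : g i ^ r = 0 := (Finset.sum_eq_zero_iff_of_nonneg
        (fun j _ => Real.rpow_nonneg (hg j) r)).1 hTz i (Finset.mem_univ i)
      by_contra hne
      exact (Real.rpow_pos_of_pos (lt_of_le_of_ne (hg i) (Ne.symm hne)) r).ne' h2
    simp only [hTz, Real.zero_rpow (one_div_ne_zero hr0.ne'), add_zero]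
    have : ∀ i, f i + g i = f i := fun i => by rw [hgz i, add_zero]
    simp only [this, hS]
    exact le_refl _
  have hSpos : 0 < S := lt_of_le_of_ne hS0 (Ne.symm hSz)
  have hTpos : 0 < T := lt_of_le_of_ne hT0 (Ne.symm hTz)
  set α := S ^ (1 / r) with hα
  set β := T ^ (1 / r) with hβ
  have hαpos : 0 < α := Real.rpow_pos_of_pos hSpos _
  have hβpos : 0 < β := Real.rpow_pos_of_pos hTpos _
  have hαβ : 0 < α + β := by linarith
  set l := α / (α + β) with hl
  have hl0 : 0 < l := div_pos hαpos hαβ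
  have hl1 : l < 1 := by
    rw [hl, div_lt_one hαβ]; linarith
  have hml : 1 - l = β / (α + β) := by rw [hl]; field_simp; ring
  have hconc := (Real.strictConcaveOn_rpow hr0 hr1).concaveOn
  have pointwise : ∀ i, l ^ (1 - r) * f i ^ r + (1 - l) ^ (1 - r) * g i ^ r
      ≤ (f i + g i) ^ r := by
    intro i
    have hmem1 : f i / l ∈ Ici (0:ℝ) := div_nonneg (hf i) hl0.le
    have hmem2 : g i / (1 - l) ∈ Ici (0:ℝ) := div_nonneg (hg i) (by linarith)
    have h := hconc.2 hmem1 hmem2 hl0.le (by linarith : (0:ℝ) ≤ 1 - l) (by ring)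
    simp only [smul_eq_mul] at h
    have e0 : l * (f i / l) + (1 - l) * (g i / (1 - l)) = f i + g i := by
      rw [mul_div_cancel₀ _ hl0.ne', mul_div_cancel₀ _ (by linarith : (1:ℝ) - l ≠ 0)]
    rw [e0] at h
    refine le_trans (le_of_eq ?_) h
    rw [Real.div_rpow (hf i) hl0.le, Real.div_rpow (hg i) (by linarith)]
    rw [Real.rpow_sub hl0, Real.rpow_one, Real.rpow_sub (by linarith : (0:ℝ) < 1 - l),
      Real.rpow_one]
    field_simp
  have hsum : l ^ (1 - r) * S + (1 - l) ^ (1 - r) * T ≤ ∑ i, (f i + g i) ^ r := by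
    rw [hS, hT, Finset.mul_sum, Finset.mul_sum, ← Finset.sum_add_distrib]
    exact Finset.sum_le_sum fun i _ => pointwise i
  have hSα : S = α ^ r := by
    rw [hα, ← Real.rpow_mul hS0, one_div_mul_cancel hr0.ne', Real.rpow_one]
  have hTβ : T = β ^ r := by
    rw [hβ, ← Real.rpow_mul hT0, one_div_mul_cancel hr0.ne', Real.rpow_one]
  have hid : l ^ (1 - r) * S + (1 - l) ^ (1 - r) * T = (α + β) ^ r := by
    rw [hSα, hTβ, hl, hml, Real.div_rpow hαpos.le hαβ.le, Real.div_rpow hβpos.le hαβ.le]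
    rw [div_mul_eq_mul_div, div_mul_eq_mul_div, ← Real.rpow_add hαpos, ← Real.rpow_add hβpos,
      sub_add_cancel, Real.rpow_one, Real.rpow_one, ← add_div]
    have hmul : (α + β) ^ r * (α + β) ^ (1 - r) = α + β := by
      rw [← Real.rpow_add hαβ]; norm_num
    rw [div_eq_iff (Real.rpow_pos_of_pos hαβ (1 - r)).ne']
    exact hmul.symm
  rw [hid] at hsum
  calc α + β = ((α + β) ^ r) ^ (1 / r) := by
        rw [← Real.rpow_mul hαβ.le, mul_one_div_cancel hr0.ne', Real.rpow_one]
    _ ≤ (∑ i, (f i + g i) ^ r) ^ (1 / r) :=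
        Real.rpow_le_rpow (Real.rpow_nonneg hαβ.le r) hsum (by positivity)

lemma lqNorm_nonneg {q : ℝ} {n : ℕ} (x : Fin n → ℝ) : 0 ≤ lqNorm q x :=
  Real.rpow_nonneg (Finset.sum_nonneg fun i _ => Real.rpow_nonneg (abs_nonneg _) q) _

lemma lqNorm_sq {q : ℝ} (hq0 : 0 < q) {n : ℕ} (x : Fin n → ℝ) :
    lqNorm q x ^ 2 = (∑ i, |x i| ^ q) ^ (2 / q) := by
  rw [lqNorm, ← Real.rpow_natCast ((∑ i, |x i| ^ q) ^ (1 / q)) 2,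
    ← Real.rpow_mul (Finset.sum_nonneg fun i _ => Real.rpow_nonneg (abs_nonneg _) q)]
  norm_num
  congr 1
  ring

lemma sq_abs_rpow {a : ℝ} {q : ℝ} (hq0 : 0 < q) : (a ^ 2) ^ (q / 2) = |a| ^ q := by
  rw [← sq_abs, ← Real.rpow_natCast |a| 2, ← Real.rpow_mul (abs_nonneg a)]
  norm_num
  congr 1
  ring

lemma bcl {q : ℝ} (hq : 1 < q) (hq2 : q ≤ 2) {n : ℕ} (x y : Fin n → ℝ) :
    lqNorm q (fun i => (x i + y i) / 2) ^ 2
      + (q - 1) * lqNorm q (fun i => (x i - y i) / 2) ^ 2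
      ≤ (lqNorm q x ^ 2 + lqNorm q y ^ 2) / 2 := by
  have hq0 : (0:ℝ) < q := by linarith
  have hq1 : (0:ℝ) ≤ q - 1 := by linarith
  set A : Fin n → ℝ := fun i => ((x i + y i) / 2) ^ 2 with hA
  set B : Fin n → ℝ := fun i => (q - 1) * ((x i - y i) / 2) ^ 2 with hB
  have hAnn : ∀ i, 0 ≤ A i := fun i => sq_nonneg _
  have hBnn : ∀ i, 0 ≤ B i := fun i => mul_nonneg hq1 (sq_nonneg _)
  have hr0 : (0:ℝ) < q / 2 := by linarith
  have hr1 : q / 2 ≤ 1 := by linarith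
  -- reverse Minkowski
  have hmink := revMinkowski hr0 hr1 A B hAnn hBnn
  rw [one_div_div] at hmink
  -- pointwise estimate and monotonicity
  have hptSum : ∑ i, (A i + B i) ^ (q / 2)
      ≤ ((∑ i, |x i| ^ q) + ∑ i, |y i| ^ q) / 2 := by
    calc ∑ i, (A i + B i) ^ (q / 2) ≤ ∑ i, (|x i| ^ q + |y i| ^ q) / 2 :=
          Finset.sum_le_sum fun i _ => key6 hq hq2 (x i) (y i)
      _ = ((∑ i, |x i| ^ q) + ∑ i, |y i| ^ q) / 2 := by
          rw [← Finset.sum_div, Finset.sum_add_distrib]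
  have step : (∑ i, A i ^ (q / 2)) ^ (2 / q) + (∑ i, B i ^ (q / 2)) ^ (2 / q)
      ≤ (((∑ i, |x i| ^ q) + ∑ i, |y i| ^ q) / 2) ^ (2 / q) := by
    refine hmink.trans (Real.rpow_le_rpow ?_ hptSum (by positivity))
    exact Finset.sum_nonneg fun i _ => Real.rpow_nonneg (by positivity) _
  -- identify left terms
  have idA : (∑ i, A i ^ (q / 2)) ^ (2 / q) = lqNorm q (fun i => (x i + y i) / 2) ^ 2 := by
    rw [lqNorm_sq hq0]
    congr 1
    exact Finset.sum_congr rfl fun i _ => sq_abs_rpow hq0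
  have idB : (∑ i, B i ^ (q / 2)) ^ (2 / q)
      = (q - 1) * lqNorm q (fun i => (x i - y i) / 2) ^ 2 := by
    have e1 : ∀ i : Fin n, B i ^ (q / 2) = (q - 1) ^ (q / 2) * |(x i - y i) / 2| ^ q := by
      intro i
      rw [hB, Real.mul_rpow hq1 (sq_nonneg _), sq_abs_rpow hq0]
    rw [Finset.sum_congr rfl fun i _ => e1 i, ← Finset.mul_sum,
      Real.mul_rpow (Real.rpow_nonneg hq1 _)
        (Finset.sum_nonneg fun i _ => Real.rpow_nonneg (abs_nonneg _) _),
      ← Real.rpow_mul hq1, lqNorm_sq hq0]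
    congr 2
    field_simp
    simp
  -- power mean on the right
  have hX0 : (0:ℝ) ≤ ∑ i, |x i| ^ q :=
    Finset.sum_nonneg fun i _ => Real.rpow_nonneg (abs_nonneg _) q
  have hY0 : (0:ℝ) ≤ ∑ i, |y i| ^ q :=
    Finset.sum_nonneg fun i _ => Real.rpow_nonneg (abs_nonneg _) q
  have hpm : (((∑ i, |x i| ^ q) + ∑ i, |y i| ^ q) / 2) ^ (2 / q)
      ≤ ((∑ i, |x i| ^ q) ^ (2 / q) + (∑ i, |y i| ^ q) ^ (2 / q)) / 2 := by
    have hconv := convexOn_rpow (p := 2 / q) (by rw [le_div_iff₀ hq0]; linarith)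
    have h := hconv.2 (Set.mem_Ici.2 hX0) (Set.mem_Ici.2 hY0)
      (by norm_num : (0:ℝ) ≤ 1/2) (by norm_num : (0:ℝ) ≤ 1/2) (by norm_num)
    simp only [smul_eq_mul] at h
    calc (((∑ i, |x i| ^ q) + ∑ i, |y i| ^ q) / 2) ^ (2 / q)
        = (1/2 * (∑ i, |x i| ^ q) + 1/2 * ∑ i, |y i| ^ q) ^ (2 / q) := by ring_nf
      _ ≤ 1/2 * (∑ i, |x i| ^ q) ^ (2 / q) + 1/2 * (∑ i, |y i| ^ q) ^ (2 / q) := h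
      _ = ((∑ i, |x i| ^ q) ^ (2 / q) + (∑ i, |y i| ^ q) ^ (2 / q)) / 2 := by ring
  rw [idA, idB] at step
  rw [lqNorm_sq hq0 x, lqNorm_sq hq0 y]
  exact step.trans hpm

lemma lqNorm_half {q : ℝ} (hq0 : 0 < q) {n : ℕ} (z : Fin n → ℝ) :
    lqNorm q (fun i => z i / 2) = lqNorm q z / 2 := by
  have h1 : ∀ i : Fin n, |z i / 2| ^ q = |z i| ^ q / 2 ^ q := by
    intro i
    rw [abs_div, abs_two, Real.div_rpow (abs_nonneg _) (by norm_num)]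
  have h2 : (0:ℝ) < 2 ^ q := Real.rpow_pos_of_pos two_pos q
  rw [lqNorm, lqNorm, Finset.sum_congr rfl fun i _ => h1 i, ← Finset.sum_div,
    Real.div_rpow (Finset.sum_nonneg fun i _ => Real.rpow_nonneg (abs_nonneg _) q) h2.le,
    ← Real.rpow_mul (by norm_num : (0:ℝ) ≤ 2), mul_one_div_cancel hq0.ne', Real.rpow_one]

/-- Lemma 4.1: for `1 < q ≤ 2`, the modulus of convexity of `ℓ_qⁿ` satisfies
`δ(t) ≥ ((q-1)/8) t²` on `[0, 2]`. -/
theorem lq_modulus_of_convexity_lower_bound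
    (q : ℝ) (hq : 1 < q) (hq2 : q ≤ 2) (n : ℕ) (hn : 1 ≤ n)
    (t : ℝ) (ht : t ∈ Set.Icc (0 : ℝ) 2) :
    lqModulusOfConvexity q n t ≥ (q - 1) / 8 * t ^ 2 := by
  obtain ⟨ht0, ht2⟩ := ht
  have hq0 : (0:ℝ) < q := by linarith
  rw [lqModulusOfConvexity, ge_iff_le]
  have hbound : ∀ d ∈ {d : ℝ | ∃ x y : Fin n → ℝ, lqNorm q x ≤ 1 ∧ lqNorm q y ≤ 1 ∧
      t ≤ lqNorm q (x - y) ∧ d = 1 - lqNorm q ((1 / 2 : ℝ) • (x + y))},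
      (q - 1) / 8 * t ^ 2 ≤ d := by
    rintro d ⟨x, y, hx, hy, hxy, rfl⟩
    have hm : (1 / 2 : ℝ) • (x + y) = fun i => (x i + y i) / 2 := by
      funext i; simp [Pi.smul_apply]; ring
    have hd : (x - y : Fin n → ℝ) = fun i => x i - y i := rfl
    have hdd : lqNorm q (fun i => (x i - y i) / 2) = lqNorm q (x - y) / 2 := by
      rw [← lqNorm_half hq0 (x - y)]; rfl
    set N := lqNorm q ((1 / 2 : ℝ) • (x + y)) with hN
    have hN0 : 0 ≤ N := lqNorm_nonneg _
    have hbcl := bcl hq hq2 x y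
    rw [← hm, ← hN] at hbcl
    rw [hdd] at hbcl
    have hxs : lqNorm q x ^ 2 ≤ 1 := by
      have := lqNorm_nonneg (q := q) x; nlinarith
    have hys : lqNorm q y ^ 2 ≤ 1 := by
      have := lqNorm_nonneg (q := q) y; nlinarith
    have hds : (t / 2) ^ 2 ≤ (lqNorm q (x - y) / 2) ^ 2 := by
      apply pow_le_pow_left₀ (by linarith) (by linarith)
    have hkey : N ^ 2 ≤ 1 - (q - 1) * (t / 2) ^ 2 := by nlinarith
    have ht4 : t ^ 2 ≤ 4 := by nlinarith
    nlinarith [sq_nonneg ((q - 1) * t ^ 2), sq_nonneg (N - 1), sq_nonneg t]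
  apply le_csInf
  · -- nonempty
    set e : Fin n → ℝ := fun i => if i = ⟨0, hn⟩ then 1 else 0 with he
    have hesum : ∑ i, |e i| ^ q = 1 := by
      rw [he]
      rw [Finset.sum_eq_single (⟨0, hn⟩ : Fin n)]
      · simp
      · intro b _ hb
        simp [hb, Real.zero_rpow hq0.ne']
      · intro h; exact absurd (Finset.mem_univ _) h
    have hnorm_e : lqNorm q e = 1 := by
      rw [lqNorm, hesum, Real.one_rpow]
    refine ⟨1, e, -e, ?_, ?_, ?_, ?_⟩
    · rw [hnorm_e]
    · have : ∑ i, |(-e) i| ^ q = 1 := by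
        simpa [abs_neg] using hesum
      rw [lqNorm, this, Real.one_rpow]
    · have h2 : (e - -e : Fin n → ℝ) = fun i => 2 * e i := by
        funext i; simp [Pi.sub_apply]; ring
      have hsum2 : ∑ i, |2 * e i| ^ q = 2 ^ q := by
        have : ∀ i : Fin n, |2 * e i| ^ q = 2 ^ q * |e i| ^ q := by
          intro i
          rw [abs_mul, abs_two, Real.mul_rpow (by norm_num) (abs_nonneg _)]
        rw [Finset.sum_congr rfl fun i _ => this i, ← Finset.mul_sum, hesum, mul_one]
      rw [h2, lqNorm]
      rw [show (fun i => |2 * e i| ^ q) = fun i => |(fun j => 2 * e j) i| ^ q from rfl] at hsum2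
      rw [hsum2, ← Real.rpow_mul (by norm_num : (0:ℝ) ≤ 2), mul_one_div_cancel hq0.ne',
        Real.rpow_one]
      exact ht2
    · have hzero : (1 / 2 : ℝ) • (e + -e) = fun _ : Fin n => (0:ℝ) := by
        funext i; simp
      rw [hzero, lqNorm]
      have : ∑ i : Fin n, |(0:ℝ)| ^ q = 0 := by
        simp [Real.zero_rpow hq0.ne']
      rw [this, Real.zero_rpow (one_div_ne_zero hq0.ne')]
      norm_num
  · exact hbound
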